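/- For T = k (each segment is one row of ℓ nonzero entries, rest zeros) with Tℓ ≤ m and ℓ − 1 ≤ s ≤ m−1, the number of decodable pairs (q, S) with |S| = s in A^base equals Tℓ · C(m − ℓ, s − ℓ + 1). -/

import Mathlib

open Finset
open scoped Classical

/-- For the single-row-per-segment base matrix (`T` disjoint column segments of size `ℓ`, the
columns of segment `j` nonzero exactly in row `j`, remaining `m - Tℓ` columns zero) and
`ℓ - 1 ≤ s ≤ m - 1`, the number of decodable pairs `(q,S)` with `|S| = s` equals
`Tℓ · C(m-ℓ, s-ℓ+1)`. -/
theorem stmt_17 {F : Type*} [Field F] {T ℓ m : ℕ}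
    (hℓ : 1 ≤ ℓ) (hml : T * ℓ ≤ m)
    (A : Matrix (Fin T) (Fin m) F) (seg : Fin m → Option (Fin T))
    (hseg : ∀ j : Fin T, (Finset.univ.filter fun c => seg c = some j).card = ℓ)
    (hA : ∀ i j, A i j ≠ 0 ↔ seg j = some i)
    (s : ℕ) (hs1 : ℓ - 1 ≤ s) (hs2 : s ≤ m - 1) :
    ((Finset.univ : Finset (Fin m × Finset (Fin m))).filter fun p =>
        p.1 ∉ p.2 ∧ p.2.card = s ∧
          (fun i => A i p.1) ∉
            Submodule.span F
              ((fun j i => A i j) '' {j : Fin m | j ∉ p.2 ∧ j ≠ p.1})).card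
      = T * ℓ * (m - ℓ).choose (s - (ℓ - 1)) := by
  classical
  set N := (m - ℓ).choose (s - (ℓ - 1)) with hN
  -- zero columns
  have hzero : ∀ q : Fin m, seg q = none → (fun i => A i q) = (0 : Fin T → F) := by
    intro q hq
    funext i
    simp only [Pi.zero_apply]
    by_contra h
    have hz := (hA i q).mp h
    rw [hq] at hz
    exact Option.some_ne_none _ hz.symm
  -- span membership characterization for columns in a segment
  have hmem : ∀ (q : Fin m) (j0 : Fin T) (X : Set (Fin m)), seg q = some j0 →
      ((fun i => A i q) ∈ Submodule.span F ((fun j i => A i j) '' X) ↔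
        ∃ c ∈ X, seg c = some j0) := by
    intro q j0 X hq
    constructor
    · intro hm
      by_contra hc
      push_neg at hc
      have hsub : Submodule.span F ((fun j i => A i j) '' X) ≤
          LinearMap.ker (LinearMap.proj j0 : (Fin T → F) →ₗ[F] F) := by
        rw [Submodule.span_le]
        rintro v ⟨c, hcX, rfl⟩
        simp only [SetLike.mem_coe, LinearMap.mem_ker, LinearMap.proj_apply]
        by_contra h
        exact hc c hcX ((hA _ _).mp h)
      have h0 := hsub hm
      simp only [LinearMap.mem_ker, LinearMap.proj_apply] at h0
      exact ((hA j0 q).mpr hq) h0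
    · rintro ⟨c, hcX, hc⟩
      have hAc : A j0 c ≠ 0 := (hA j0 c).mpr hc
      have hEq : (fun i => A i q) = (A j0 q * (A j0 c)⁻¹) • (fun i => A i c) := by
        funext i
        by_cases hi : i = j0
        · subst hi
          simp only [Pi.smul_apply, smul_eq_mul]
          field_simp
        · have h1 : A i q = 0 := by
            by_contra h
            exact hi (Option.some.inj ((((hA _ _).mp h)).symm.trans hq))
          have h2 : A i c = 0 := by
            by_contra h
            exact hi (Option.some.inj ((((hA _ _).mp h)).symm.trans hc))
          simp [h1, h2]
      rw [hEq]
      exact Submodule.smul_mem _ _ (Submodule.subset_span ⟨c, hcX, rfl⟩)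
  -- combinatorial predicate
  set P : Fin m × Finset (Fin m) → Prop := fun p =>
    ∃ j0, seg p.1 = some j0 ∧ p.1 ∉ p.2 ∧ p.2.card = s ∧
      ∀ c, seg c = some j0 → c ≠ p.1 → c ∈ p.2 with hP
  have hpred : ∀ p : Fin m × Finset (Fin m),
      (p.1 ∉ p.2 ∧ p.2.card = s ∧
        (fun i => A i p.1) ∉ Submodule.span F
          ((fun j i => A i j) '' {j : Fin m | j ∉ p.2 ∧ j ≠ p.1})) ↔ P p := by
    intro p
    cases hq : seg p.1 with
    | none =>
      constructor
      · rintro ⟨-, -, hns⟩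
        exact absurd (by rw [hzero p.1 hq]; exact Submodule.zero_mem _) hns
      · rintro ⟨j0, hj0, -⟩
        rw [hq] at hj0
        exact absurd hj0.symm (Option.some_ne_none _)
    | some j0 =>
      rw [hP]
      constructor
      · rintro ⟨h1, h2, h3⟩
        refine ⟨j0, hq, h1, h2, ?_⟩
        intro c hc hcq
        by_contra hcS
        exact h3 ((hmem p.1 j0 _ hq).mpr ⟨c, ⟨hcS, hcq⟩, hc⟩)
      · rintro ⟨j1, hj1, h1, h2, h3⟩
        have : j1 = j0 := Option.some.inj (hj1.symm.trans hq)
        subst this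
        refine ⟨h1, h2, ?_⟩
        rw [hmem p.1 j1 _ hq]
        rintro ⟨c, ⟨hcS, hcq⟩, hc⟩
        exact hcS (h3 c hc hcq)
  -- rewrite the filter
  have hfilter : ((Finset.univ : Finset (Fin m × Finset (Fin m))).filter fun p =>
        p.1 ∉ p.2 ∧ p.2.card = s ∧
          (fun i => A i p.1) ∉ Submodule.span F
            ((fun j i => A i j) '' {j : Fin m | j ∉ p.2 ∧ j ≠ p.1}))
      = Finset.univ.filter P := by
    apply Finset.filter_congr
    intro p _
    exact hpred p
  rw [hfilter]
  -- fiberwise count over q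
  have hfib : (Finset.univ.filter P).card
      = ∑ q : Fin m, ((Finset.univ : Finset (Finset (Fin m))).filter fun S => P (q, S)).card := by
    rw [Finset.card_eq_sum_card_fiberwise (f := Prod.fst) (t := Finset.univ)
      (fun x _ => Finset.mem_univ _)]
    refine Finset.sum_congr rfl fun q _ => ?_
    refine Finset.card_bij' (fun p _ => p.2) (fun S _ => (q, S)) ?_ ?_ ?_ ?_
    · intro p hp
      rw [Finset.mem_filter, Finset.mem_filter] at hp
      obtain ⟨⟨-, hPp⟩, hq1⟩ := hp
      rw [Finset.mem_filter]
      refine ⟨Finset.mem_univ _, ?_⟩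
      have hqp : (q, p.2) = p := by rw [← hq1]
      rw [hqp]
      exact hPp
    · intro S hS
      rw [Finset.mem_filter] at hS
      rw [Finset.mem_filter, Finset.mem_filter]
      exact ⟨⟨Finset.mem_univ _, hS.2⟩, rfl⟩
    · intro p hp
      rw [Finset.mem_filter] at hp
      exact Prod.ext hp.2.symm rfl
    · intro S hS
      rfl
  rw [hfib]
  -- inner count for each q
  have hinner : ∀ (q : Fin m) (j0 : Fin T), seg q = some j0 →
      ((Finset.univ : Finset (Finset (Fin m))).filter fun S => P (q, S)).card = N := by
    intro q j0 hq
    set K : Finset (Fin m) := Finset.univ.filter fun c => seg c = some j0 with hK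
    have hKcard : K.card = ℓ := hseg j0
    have hqK : q ∈ K := by simp [hK, hq]
    have hKe : (K.erase q).card = ℓ - 1 := by rw [Finset.card_erase_of_mem hqK, hKcard]
    have hUK : (Finset.univ \ K).card = m - ℓ := by
      rw [Finset.card_sdiff_of_subset (Finset.subset_univ K), hKcard, Finset.card_univ, Fintype.card_fin]
    -- simplify predicate for this q
    have hPq : ∀ S : Finset (Fin m), P (q, S) ↔ (q ∉ S ∧ S.card = s ∧ K.erase q ⊆ S) := by
      intro S
      rw [hP]
      constructor
      · rintro ⟨j1, hj1, h1, h2, h3⟩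
        have : j1 = j0 := Option.some.inj (hj1.symm.trans hq)
        subst this
        refine ⟨h1, h2, ?_⟩
        intro c hc
        rw [Finset.mem_erase, hK, Finset.mem_filter] at hc
        exact h3 c hc.2.2 hc.1
      · rintro ⟨h1, h2, h3⟩
        refine ⟨j0, hq, h1, h2, ?_⟩
        intro c hc hcq
        exact h3 (by rw [Finset.mem_erase, hK, Finset.mem_filter]; exact ⟨hcq, Finset.mem_univ c, hc⟩)
    have hinter : ∀ S : Finset (Fin m), q ∉ S → K.erase q ⊆ S → S ∩ K = K.erase q := by
      intro S hqS hKS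
      apply Finset.Subset.antisymm
      · intro c hc
        rw [Finset.mem_inter] at hc
        rw [Finset.mem_erase]
        exact ⟨fun h => hqS (h ▸ hc.1), hc.2⟩
      · intro c hc
        rw [Finset.mem_inter]
        exact ⟨hKS hc, Finset.mem_of_mem_erase hc⟩
    have hpow : ((Finset.univ \ K).powersetCard (s - (ℓ - 1))).card = N := by
      rw [Finset.card_powersetCard, hUK, hN]
    rw [← hpow]
    refine Finset.card_bij' (fun S _ => S \ K) (fun S' _ => S' ∪ K.erase q) ?_ ?_ ?_ ?_
    · intro S hS
      rw [Finset.mem_filter] at hS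
      obtain ⟨-, hS⟩ := hS
      rw [hPq] at hS
      obtain ⟨h1, h2, h3⟩ := hS
      rw [Finset.mem_powersetCard]
      constructor
      · intro c hc
        rw [Finset.mem_sdiff] at hc ⊢
        exact ⟨Finset.mem_univ c, hc.2⟩
      · have : S \ K = S \ (S ∩ K) := by
          ext c
          simp only [Finset.mem_sdiff, Finset.mem_inter]
          tauto
        show (S \ K).card = s - (ℓ - 1)
        rw [this, Finset.card_sdiff_of_subset (Finset.inter_subset_left), hinter S h1 h3, hKe, h2]
    · intro S' hS'
      rw [Finset.mem_powersetCard] at hS'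
      obtain ⟨hsub, hcard⟩ := hS'
      have hdisj : Disjoint S' (K.erase q) := by
        refine Finset.disjoint_left.mpr fun c hc hc' => ?_
        have := hsub hc
        rw [Finset.mem_sdiff] at this
        exact this.2 (Finset.mem_of_mem_erase hc')
      rw [Finset.mem_filter]
      refine ⟨Finset.mem_univ _, ?_⟩
      rw [hPq]
      refine ⟨?_, ?_, ?_⟩
      · rw [Finset.mem_union]
        rintro (h | h)
        · have := hsub h
          rw [Finset.mem_sdiff] at this
          exact this.2 hqK
        · exact (Finset.mem_erase.mp h).1 rfl
      · rw [Finset.card_union_of_disjoint hdisj, hcard, hKe, Nat.sub_add_cancel hs1]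
      · exact Finset.subset_union_right
    · intro S hS
      rw [Finset.mem_filter] at hS
      obtain ⟨-, hS⟩ := hS
      rw [hPq] at hS
      obtain ⟨h1, -, h3⟩ := hS
      ext c
      simp only [Finset.mem_union, Finset.mem_sdiff, Finset.mem_erase]
      constructor
      · rintro (⟨hc, -⟩ | ⟨hne, hcK⟩)
        · exact hc
        · exact h3 (Finset.mem_erase.mpr ⟨hne, hcK⟩)
      · intro hc
        by_cases hcK : c ∈ K
        · exact Or.inr ⟨fun h => h1 (h ▸ hc), hcK⟩
        · exact Or.inl ⟨hc, hcK⟩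
    · intro S' hS'
      rw [Finset.mem_powersetCard] at hS'
      obtain ⟨hsub, -⟩ := hS'
      ext c
      simp only [Finset.mem_sdiff, Finset.mem_union, Finset.mem_erase]
      constructor
      · rintro ⟨h | h, hK'⟩
        · exact h
        · exact absurd h.2 hK'
      · intro hc
        have := hsub hc
        rw [Finset.mem_sdiff] at this
        exact ⟨Or.inl hc, this.2⟩
  -- sum over q
  have hnone : ∀ q : Fin m, seg q = none →
      ((Finset.univ : Finset (Finset (Fin m))).filter fun S => P (q, S)).card = 0 := by
    intro q hq
    rw [Finset.card_eq_zero, Finset.filter_eq_empty_iff]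
    rintro S -
    rw [hP]
    rintro ⟨j0, hj0, -⟩
    rw [hq] at hj0
    exact Option.some_ne_none _ hj0.symm
  have hsum : (∑ q : Fin m,
      ((Finset.univ : Finset (Finset (Fin m))).filter fun S => P (q, S)).card)
      = ∑ q : Fin m, if ∃ j, seg q = some j then N else 0 := by
    refine Finset.sum_congr rfl fun q _ => ?_
    cases hq : seg q with
    | none =>
      rw [hnone q hq, if_neg]
      rintro ⟨j, hj⟩
      simp [hq] at hj
    | some j0 =>
      rw [hinner q j0 hq, if_pos ⟨j0, rfl⟩]
  rw [hsum, ← Finset.sum_filter]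
  rw [Finset.sum_const, smul_eq_mul]
  congr 1
  -- count columns with a segment
  have hsplit : (Finset.univ.filter fun q : Fin m => ∃ j, seg q = some j)
      = Finset.univ.biUnion fun j : Fin T => Finset.univ.filter fun c => seg c = some j := by
    ext q
    simp
  rw [hsplit, Finset.card_biUnion]
  · rw [Finset.sum_congr rfl fun j _ => hseg j, Finset.sum_const, smul_eq_mul,
      Finset.card_univ, Fintype.card_fin]
  · intro a _ b _ hab
    refine Finset.disjoint_left.mpr fun q hq1 hq2 => ?_
    rw [Finset.mem_filter] at hq1 hq2
    exact hab (Option.some.inj (hq1.2.symm.trans hq2.2))
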